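/- The infinite set S = {y₁, y₂, y₃, …} is good: every function f : S → ℂ admits a decomposition f = u₁ + u₂ + u₃ + u₄ into functions of the individual coordinates. -/

import Mathlib

open scoped BigOperators

/-- Symbols: x₁,x₂,x₃,x₄ are 0,1,2,3 and αⱼ = j+3 (so all symbols are distinct naturals). -/
def α (j : ℕ) : ℕ := j + 3

/-- The points y₁, y₂, y₃, … of the paper's construction. -/
def y : ℕ → Fin 4 → ℕ := fun k =>
  if k = 1 then ![0, 1, 2, 3]
  else if k = 2 then ![0, 1, α 1, α 2]
  else match k % 4 with
    | 1 => ![0, α (k - 1), α k, α (k + 1)]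
    | 2 => ![α (k - 3), 1, α (k - 1), α k]
    | 3 => ![α k, α (k + 1), 2, α (k - 1)]
    | _ => ![α (k - 1), α k, α (k - 3), 3]

/-- u = (u₁,u₂,u₃,u₄) solves equation (1) for f on S. -/
def Solves (S : Set (Fin 4 → ℕ)) (f : (Fin 4 → ℕ) → ℂ) (u : Fin 4 → ℕ → ℂ) : Prop :=
  ∀ p ∈ S, f p = ∑ i, u i (p i)

/-- S is good: every complex function on S decomposes into coordinate functions. -/
def IsGood (S : Set (Fin 4 → ℕ)) : Prop := ∀ f, ∃ u, Solves S f u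

/-- i-th projection of S. -/
def proj (S : Set (Fin 4 → ℕ)) (i : Fin 4) : Set ℕ := (fun p => p i) '' S

/-- B is a boundary set of S: for every f and every prescription U on B,
equation (1) admits a solution agreeing with U on B, unique on the projections of S. -/
def IsBoundary (S : Set (Fin 4 → ℕ)) (B : Set ℕ) : Prop :=
  B ⊆ ⋃ i, proj S i ∧
  ∀ f : (Fin 4 → ℕ) → ℂ, ∀ U : ℕ → ℂ,
    (∃ u, Solves S f u ∧ ∀ i, ∀ a ∈ B ∩ proj S i, u i a = U a) ∧
    ∀ u v, Solves S f u → (∀ i, ∀ a ∈ B ∩ proj S i, u i a = U a) →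
      Solves S f v → (∀ i, ∀ a ∈ B ∩ proj S i, v i a = U a) →
      ∀ i, ∀ a ∈ proj S i, u i a = v i a

/-- S is full: a maximal good subset of the product of its projections. -/
def IsFull (S : Set (Fin 4 → ℕ)) : Prop :=
  IsGood S ∧ ∀ T : Set (Fin 4 → ℕ), S ⊆ T → (∀ p ∈ T, ∀ i, p i ∈ proj S i) →
    IsGood T → T = S

/-- Sₙ = {y₁,…,y_N}. -/
def Sn (N : ℕ) : Set (Fin 4 → ℕ) := y '' Set.Icc 1 N

/-- The infinite set S = {y₁, y₂, …}. -/
def Sinf : Set (Fin 4 → ℕ) := y '' Set.Ici 1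

/-- The extra point z = zₙ = (α_{4n−1}, x₂, α_{4n−3}, x₄). -/
def z (n : ℕ) : Fin 4 → ℕ := ![α (4 * n - 1), 1, α (4 * n - 3), 3]

/-- Two points of S are related iff some finite full subset of S contains both. -/
def Related (S : Set (Fin 4 → ℕ)) (p q : Fin 4 → ℕ) : Prop :=
  ∃ K, K ⊆ S ∧ K.Finite ∧ IsFull K ∧ p ∈ K ∧ q ∈ K

/-- The 4n×4n incidence matrix A_{4n}: rows y₂,…,y_{4n},zₙ; columns α₁,…,α_{4n}. -/
def A (n : ℕ) : Matrix (Fin (4 * n)) (Fin (4 * n)) ℚ :=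
  Matrix.of fun i j =>
    if ∃ k, (if (i : ℕ) = 4 * n - 1 then z n else y ((i : ℕ) + 2)) k = (j : ℕ) + 4
    then 1 else 0

/- ===== auxiliary construction for stmt_8 ===== -/

namespace Stmt8

lemma y5 (n : ℕ) : y (4*n+5) = ![0, α (4*n+4), α (4*n+5), α (4*n+6)] := by
  have h1 : (4*n+5) % 4 = 1 := by omega
  unfold y
  rw [if_neg (by omega), if_neg (by omega), h1]
  norm_num

lemma y6 (n : ℕ) : y (4*n+6) = ![α (4*n+3), 1, α (4*n+5), α (4*n+6)] := by
  have h1 : (4*n+6) % 4 = 2 := by omega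
  unfold y
  rw [if_neg (by omega), if_neg (by omega), h1]
  norm_num [show 4*n+6-3 = 4*n+3 from by omega]

lemma y7 (n : ℕ) : y (4*n+7) = ![α (4*n+7), α (4*n+8), 2, α (4*n+6)] := by
  have h1 : (4*n+7) % 4 = 3 := by omega
  unfold y
  rw [if_neg (by omega), if_neg (by omega), h1]
  norm_num

lemma y8 (n : ℕ) : y (4*n+8) = ![α (4*n+7), α (4*n+8), α (4*n+5), 3] := by
  have h1 : (4*n+8) % 4 = 0 := by omega
  unfold y
  rw [if_neg (by omega), if_neg (by omega), h1]
  norm_num [show 4*n+8-3 = 4*n+5 from by omega]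

lemma y1 : y 1 = ![0, 1, 2, 3] := by unfold y; norm_num
lemma y2 : y 2 = ![0, 1, α 1, α 2] := by unfold y; norm_num
lemma y3 : y 3 = ![α 3, α 4, 2, α 2] := by
  unfold y; rw [if_neg (by omega), if_neg (by omega)]; rfl
lemma y4 : y 4 = ![α 3, α 4, α 1, 3] := by
  unfold y; rw [if_neg (by omega), if_neg (by omega)]; rfl

/-- values (v_{4n+1}, v_{4n+2}, v_{4n+3}, v_{4n+4}) of the coordinate functions
at the symbols α_{4n+1},…,α_{4n+4}. -/
noncomputable def V (f : (Fin 4 → ℕ) → ℂ) : ℕ → ℂ × ℂ × ℂ × ℂ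
  | 0 =>
    let v1 := (f (y 2) + f (y 4) - f (y 1) - f (y 3))/2
    let v2 := (f (y 2) - f (y 4) + f (y 1) + f (y 3))/2
    let s := f (y 3) - v2
    ⟨v1, v2, (s - f (y 5) + f (y 6))/2, (s + f (y 5) - f (y 6))/2⟩
  | n+1 =>
    let P := f (y (4*n+5)) - (V f n).2.2.2
    let w1 := (P + f (y (4*n+8)) - f (y (4*n+7)) - f (y 1))/2
    let w2 := (P - f (y (4*n+8)) + f (y (4*n+7)) + f (y 1))/2
    let Q := f (y (4*n+7)) - w2
    ⟨w1, w2, (Q - f (y (4*n+9)) + f (y (4*n+10)))/2,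
      (Q + f (y (4*n+9)) - f (y (4*n+10)))/2⟩

noncomputable def v (f : (Fin 4 → ℕ) → ℂ) (j : ℕ) : ℂ :=
  if (j-1) % 4 = 0 then (V f ((j-1)/4)).1
  else if (j-1) % 4 = 1 then (V f ((j-1)/4)).2.1
  else if (j-1) % 4 = 2 then (V f ((j-1)/4)).2.2.1
  else (V f ((j-1)/4)).2.2.2

lemma v1 (f : (Fin 4 → ℕ) → ℂ) (n j : ℕ) (h : j = 4*n+1) : v f j = (V f n).1 := by
  subst h
  have h0 : (4*n+1-1) % 4 = 0 := by omega
  have hdiv : (4*n+1-1)/4 = n := by omega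
  rw [v, if_pos h0, hdiv]

lemma v2 (f : (Fin 4 → ℕ) → ℂ) (n j : ℕ) (h : j = 4*n+2) : v f j = (V f n).2.1 := by
  subst h
  have h0 : ¬ (4*n+2-1) % 4 = 0 := by omega
  have h1 : (4*n+2-1) % 4 = 1 := by omega
  have hdiv : (4*n+2-1)/4 = n := by omega
  rw [v, if_neg h0, if_pos h1, hdiv]

lemma v3 (f : (Fin 4 → ℕ) → ℂ) (n j : ℕ) (h : j = 4*n+3) : v f j = (V f n).2.2.1 := by
  subst h
  have h0 : ¬ (4*n+3-1) % 4 = 0 := by omega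
  have h1 : ¬ (4*n+3-1) % 4 = 1 := by omega
  have h2 : (4*n+3-1) % 4 = 2 := by omega
  have hdiv : (4*n+3-1)/4 = n := by omega
  rw [v, if_neg h0, if_neg h1, if_pos h2, hdiv]

lemma v4 (f : (Fin 4 → ℕ) → ℂ) (n j : ℕ) (h : j = 4*n+4) : v f j = (V f n).2.2.2 := by
  subst h
  have h0 : ¬ (4*n+4-1) % 4 = 0 := by omega
  have h1 : ¬ (4*n+4-1) % 4 = 1 := by omega
  have h2 : ¬ (4*n+4-1) % 4 = 2 := by omega
  have hdiv : (4*n+4-1)/4 = n := by omega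
  rw [v, if_neg h0, if_neg h1, if_neg h2, hdiv]

/-- The coordinate functions. -/
noncomputable def uu (f : (Fin 4 → ℕ) → ℂ) : Fin 4 → ℕ → ℂ := fun i m =>
  if m < 4 then (if i = 3 then f (y 1) else 0) else v f (m - 3)

lemma uu_small (f : (Fin 4 → ℕ) → ℂ) (i : Fin 4) (m : ℕ) (h : m < 4) (h3 : i ≠ 3) :
    uu f i m = 0 := by rw [uu, if_pos h, if_neg h3]

lemma uu_three (f : (Fin 4 → ℕ) → ℂ) : uu f 3 3 = f (y 1) := by simp [uu]

lemma uu_alpha (f : (Fin 4 → ℕ) → ℂ) (i : Fin 4) (j : ℕ) (h : 1 ≤ j) :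
    uu f i (α j) = v f j := by
  have h4 : ¬ (α j < 4) := by rw [α]; omega
  have h3 : α j - 3 = j := by rw [α]; omega
  rw [uu, if_neg h4, h3]

/-- key cross-block identity -/
lemma Vdiff (f : (Fin 4 → ℕ) → ℂ) (n : ℕ) :
    (V f n).2.2.2 - (V f n).2.2.1 = f (y (4*n+5)) - f (y (4*n+6)) := by
  cases n with
  | zero => simp only [V]; norm_num; ring
  | succ m =>
    have h5 : 4*(m+1)+5 = 4*m+9 := by ring
    have h6 : 4*(m+1)+6 = 4*m+10 := by ring
    rw [h5, h6]
    simp only [V]; ring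

end Stmt8

/-- the infinite set S = {y₁, y₂, …} is good. -/
theorem stmt_8 : IsGood Sinf := by
  intro f
  refine ⟨Stmt8.uu f, ?_⟩
  rintro p ⟨k, hk, rfl⟩
  simp only [Set.mem_Ici] at hk
  rw [Fin.sum_univ_four]
  rcases Nat.lt_or_ge k 5 with h | h
  · interval_cases k
    · conv_rhs => rw [Stmt8.y1]
      simp only [Matrix.cons_val_zero, Matrix.cons_val_one, Matrix.head_cons,
        Matrix.cons_val_two, Matrix.tail_cons, Matrix.cons_val_three]
      rw [Stmt8.uu_small f 0 0 (by omega) (by decide),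
        Stmt8.uu_small f 1 1 (by omega) (by decide),
        Stmt8.uu_small f 2 2 (by omega) (by decide), Stmt8.uu_three]
      ring
    · conv_rhs => rw [Stmt8.y2]
      simp only [Matrix.cons_val_zero, Matrix.cons_val_one, Matrix.head_cons,
        Matrix.cons_val_two, Matrix.tail_cons, Matrix.cons_val_three]
      rw [Stmt8.uu_small f 0 0 (by omega) (by decide),
        Stmt8.uu_small f 1 1 (by omega) (by decide),
        Stmt8.uu_alpha f 2 1 (by omega), Stmt8.uu_alpha f 3 2 (by omega),
        Stmt8.v1 f 0 1 (by omega), Stmt8.v2 f 0 2 (by omega)]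
      simp only [Stmt8.V]
      ring
    · conv_rhs => rw [Stmt8.y3]
      simp only [Matrix.cons_val_zero, Matrix.cons_val_one, Matrix.head_cons,
        Matrix.cons_val_two, Matrix.tail_cons, Matrix.cons_val_three]
      rw [Stmt8.uu_small f 2 2 (by omega) (by decide),
        Stmt8.uu_alpha f 0 3 (by omega), Stmt8.uu_alpha f 1 4 (by omega),
        Stmt8.uu_alpha f 3 2 (by omega),
        Stmt8.v3 f 0 3 (by omega), Stmt8.v4 f 0 4 (by omega), Stmt8.v2 f 0 2 (by omega)]
      simp only [Stmt8.V]
      ring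
    · conv_rhs => rw [Stmt8.y4]
      simp only [Matrix.cons_val_zero, Matrix.cons_val_one, Matrix.head_cons,
        Matrix.cons_val_two, Matrix.tail_cons, Matrix.cons_val_three]
      rw [Stmt8.uu_alpha f 0 3 (by omega), Stmt8.uu_alpha f 1 4 (by omega),
        Stmt8.uu_alpha f 2 1 (by omega), Stmt8.uu_three,
        Stmt8.v3 f 0 3 (by omega), Stmt8.v4 f 0 4 (by omega), Stmt8.v1 f 0 1 (by omega)]
      simp only [Stmt8.V]
      ring
  · obtain ⟨n, hn | hn | hn | hn⟩ :
        ∃ n, k = 4*n+5 ∨ k = 4*n+6 ∨ k = 4*n+7 ∨ k = 4*n+8 := ⟨(k-5)/4, by omega⟩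
    · subst hn
      conv_rhs => rw [Stmt8.y5]
      simp only [Matrix.cons_val_zero, Matrix.cons_val_one, Matrix.head_cons,
        Matrix.cons_val_two, Matrix.tail_cons, Matrix.cons_val_three]
      rw [Stmt8.uu_small f 0 0 (by omega) (by decide),
        Stmt8.uu_alpha f 1 (4*n+4) (by omega), Stmt8.uu_alpha f 2 (4*n+5) (by omega),
        Stmt8.uu_alpha f 3 (4*n+6) (by omega),
        Stmt8.v4 f n (4*n+4) (by ring), Stmt8.v1 f (n+1) (4*n+5) (by ring),
        Stmt8.v2 f (n+1) (4*n+6) (by ring)]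
      simp only [Stmt8.V]
      ring
    · subst hn
      conv_rhs => rw [Stmt8.y6]
      simp only [Matrix.cons_val_zero, Matrix.cons_val_one, Matrix.head_cons,
        Matrix.cons_val_two, Matrix.tail_cons, Matrix.cons_val_three]
      rw [Stmt8.uu_small f 1 1 (by omega) (by decide),
        Stmt8.uu_alpha f 0 (4*n+3) (by omega), Stmt8.uu_alpha f 2 (4*n+5) (by omega),
        Stmt8.uu_alpha f 3 (4*n+6) (by omega),
        Stmt8.v3 f n (4*n+3) (by ring), Stmt8.v1 f (n+1) (4*n+5) (by ring),
        Stmt8.v2 f (n+1) (4*n+6) (by ring)]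
      have hd := Stmt8.Vdiff f n
      simp only [Stmt8.V]
      linear_combination hd
    · subst hn
      conv_rhs => rw [Stmt8.y7]
      simp only [Matrix.cons_val_zero, Matrix.cons_val_one, Matrix.head_cons,
        Matrix.cons_val_two, Matrix.tail_cons, Matrix.cons_val_three]
      rw [Stmt8.uu_small f 2 2 (by omega) (by decide),
        Stmt8.uu_alpha f 0 (4*n+7) (by omega), Stmt8.uu_alpha f 1 (4*n+8) (by omega),
        Stmt8.uu_alpha f 3 (4*n+6) (by omega),
        Stmt8.v3 f (n+1) (4*n+7) (by ring), Stmt8.v4 f (n+1) (4*n+8) (by ring),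
        Stmt8.v2 f (n+1) (4*n+6) (by ring)]
      simp only [Stmt8.V]
      ring
    · subst hn
      conv_rhs => rw [Stmt8.y8]
      simp only [Matrix.cons_val_zero, Matrix.cons_val_one, Matrix.head_cons,
        Matrix.cons_val_two, Matrix.tail_cons, Matrix.cons_val_three]
      rw [Stmt8.uu_alpha f 0 (4*n+7) (by omega), Stmt8.uu_alpha f 1 (4*n+8) (by omega),
        Stmt8.uu_alpha f 2 (4*n+5) (by omega), Stmt8.uu_three,
        Stmt8.v3 f (n+1) (4*n+7) (by ring), Stmt8.v4 f (n+1) (4*n+8) (by ring),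
        Stmt8.v1 f (n+1) (4*n+5) (by ring)]
      simp only [Stmt8.V]
      ring
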